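/- Let L be a finite geometric lattice and A*(L) its Orlik–Solomon algebra over a field. Then for every p ∈ L, dim A*(L)_p = (−1)^{r(p)} μ(0, p), where μ is the Möbius function of L. -/

import Mathlib

open scoped Classical

structure GeometricLattice (L : Type*) [Lattice L] [OrderBot L] [Fintype L] where
  rk : L → ℕ
  rk_bot : rk ⊥ = 0
  rk_strictMono : StrictMono rk
  rk_covby : ∀ {p q : L}, p ⋖ q → rk q = rk p + 1
  submodular : ∀ p q : L, rk (p ⊓ q) + rk (p ⊔ q) ≤ rk p + rk q
  atomistic : ∀ p : L, p ≠ ⊥ → ∃ S : Finset L, (∀ a ∈ S, IsAtom a) ∧ p = S.sup id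

variable (R : Type*) [CommRing R] (L : Type*) [Lattice L] [OrderBot L] [Fintype L]

/-- The type of atoms of `L`. -/
def Atoms : Type _ := {a : L // IsAtom a}

noncomputable instance : Fintype (Atoms L) := Subtype.fintype _

/-- A fixed enumeration of the elements of `L`, used only to order the atoms in
exterior-algebra sign computations. -/
noncomputable def elemIdx : L → ℕ := fun x => ((Fintype.equivFin L) x : ℕ)

/-- The underlying module of the exterior algebra `E^*(L)` on the atoms of `L`:
the free `R`-module with basis `e_S` for `S` a finite set of atoms. -/
def OSModule : Type _ := Finset (Atoms L) →₀ R

noncomputable instance : AddCommGroup (OSModule R L) := Finsupp.instAddCommGroup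
noncomputable instance : Module R (OSModule R L) := Finsupp.module _ _

/-- basis vector `e_S` -/
noncomputable def osE (S : Finset (Atoms L)) : OSModule R L := Finsupp.single S 1

/-- the sign exponent of `a` inside `S`. -/
noncomputable def delSign (S : Finset (Atoms L)) (a : Atoms L) : ℕ :=
  (S.filter (fun b => elemIdx L b.val < elemIdx L a.val)).card

/-- the Orlik–Solomon derivation `∂ e_S = ∑_j (-1)^{j-1} e_{S \ a_j}`. -/
noncomputable def osDel : OSModule R L →ₗ[R] OSModule R L :=
  Finsupp.lift (OSModule R L) R (Finset (Atoms L)) fun S =>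
    ∑ a ∈ S, ((-1 : R) ^ delSign L S a) • osE R L (S.erase a)

/-- number of inversions between `S` and `T` in the chosen ordering. -/
noncomputable def mulSign (S T : Finset (Atoms L)) : ℕ :=
  ((S ×ˢ T).filter (fun x => elemIdx L x.2.val < elemIdx L x.1.val)).card

/-- the exterior product on `E^*(L)`: `e_S ⋅ e_T = ± e_{S ∪ T}` if `S, T` are
disjoint, and `0` otherwise. -/
noncomputable def osMul : OSModule R L →ₗ[R] OSModule R L →ₗ[R] OSModule R L :=
  Finsupp.lift (OSModule R L →ₗ[R] OSModule R L) R (Finset (Atoms L)) fun S =>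
    Finsupp.lift (OSModule R L) R (Finset (Atoms L)) fun T =>
      if Disjoint S T then ((-1 : R) ^ mulSign L S T) • osE R L (S ∪ T) else 0

/-- a set of atoms is dependent if the rank of its join is less than its size. -/
def IsDepSet (gl : GeometricLattice L) (S : Finset (Atoms L)) : Prop :=
  gl.rk (S.sup fun a => a.val) < S.card

/-- The Orlik–Solomon ideal: the span of all products `e_T ⋅ ∂ e_S` for `S` a
dependent set of atoms (this spans the two-sided ideal generated by the `∂ e_S`). -/
noncomputable def osIdeal (gl : GeometricLattice L) : Submodule R (OSModule R L) :=
  Submodule.span R {x | ∃ (T S : Finset (Atoms L)), IsDepSet L gl S ∧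
    x = osMul R L (osE R L T) (osDel R L (osE R L S))}

/-- the `L`-homogeneous part of `E^*(L)` of order `p`: the span of the `e_S` with
`⋁ S = p`. -/
noncomputable def osPiece (p : L) : Submodule R (OSModule R L) :=
  Submodule.span R {x | ∃ S : Finset (Atoms L), (S.sup fun a => a.val) = p ∧ x = osE R L S}


set_option linter.unusedSectionVars false

section Basic
variable {R : Type*} [CommRing R] {L : Type*} [Lattice L] [OrderBot L] [Fintype L]

lemma osMul_osE (S T : Finset (Atoms L)) :
    osMul R L (osE R L S) (osE R L T) =
      if Disjoint S T then ((-1:R) ^ mulSign L S T) • osE R L (S ∪ T) else 0 := by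
  unfold osMul osE
  erw [Finsupp.lift_apply, Finsupp.sum_single_index (a := S) (zero_smul _ _), one_smul]
  erw [Finsupp.lift_apply, Finsupp.sum_single_index (by simp), one_smul]

lemma osDel_osE (S : Finset (Atoms L)) :
    osDel R L (osE R L S) =
      ∑ a ∈ S, ((-1 : R) ^ delSign L S a) • osE R L (S.erase a) := by
  unfold osDel osE
  erw [Finsupp.lift_apply, Finsupp.sum_single_index (by simp), one_smul]

end Basic
section Signs
variable {R : Type*} [CommRing R] {L : Type*} [Lattice L] [OrderBot L] [Fintype L]

lemma elemIdx_inj {a b : Atoms L} (h : elemIdx L a.val = elemIdx L b.val) : a = b := by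
  unfold elemIdx at h
  exact Subtype.ext ((Fintype.equivFin L).injective (Fin.ext h))

lemma mulSign_singleton (a : Atoms L) (S : Finset (Atoms L)) :
    mulSign L {a} S = delSign L S a := by
  unfold mulSign delSign
  rw [Finset.singleton_product, Finset.filter_map, Finset.card_map]
  rfl

lemma delSign_insert {a : Atoms L} {S : Finset (Atoms L)} (ha : a ∉ S) (c : Atoms L) :
    delSign L (insert a S) c
      = delSign L S c + (if elemIdx L a.val < elemIdx L c.val then 1 else 0) := by
  unfold delSign
  rw [Finset.filter_insert]
  split
  · rw [Finset.card_insert_of_notMem (by simp [ha])]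
  · simp

lemma mulSign_union_right {T U V : Finset (Atoms L)} (h : Disjoint U V) :
    mulSign L T (U ∪ V) = mulSign L T U + mulSign L T V := by
  unfold mulSign
  rw [Finset.product_union, Finset.filter_union, Finset.card_union_of_disjoint]
  exact Finset.disjoint_filter_filter ((Finset.disjoint_product.2 (Or.inr h)))

lemma mulSign_union_left {T U V : Finset (Atoms L)} (h : Disjoint T U) :
    mulSign L (T ∪ U) V = mulSign L T V + mulSign L U V := by
  unfold mulSign
  rw [Finset.union_product, Finset.filter_union, Finset.card_union_of_disjoint]
  exact Finset.disjoint_filter_filter ((Finset.disjoint_product.2 (Or.inl h)))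

end Signs
section Ops
variable {R : Type*} [CommRing R] {L : Type*} [Lattice L] [OrderBot L] [Fintype L]

lemma osLhom_ext {M : Type*} [AddCommGroup M] [Module R M]
    {f g : OSModule R L →ₗ[R] M} (h : ∀ S, f (osE R L S) = g (osE R L S)) : f = g := by
  refine Finsupp.lhom_ext fun S b => ?_
  have : (Finsupp.single S b : OSModule R L) = b • osE R L S := by
    unfold osE; erw [Finsupp.smul_single, smul_eq_mul, mul_one]
  erw [this, map_smul, map_smul]
  exact congrArg (fun y => b • y) (h S)

/-- left multiplication by a basis vector -/
noncomputable abbrev mulE (T : Finset (Atoms L)) : OSModule R L →ₗ[R] OSModule R L :=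
  osMul R L (osE R L T)

lemma mulE_osE (T U : Finset (Atoms L)) :
    mulE (R := R) T (osE R L U) =
      if Disjoint T U then ((-1:R) ^ mulSign L T U) • osE R L (T ∪ U) else 0 :=
  osMul_osE T U

lemma mulE_empty : mulE (R := R) (L := L) ∅ = LinearMap.id := by
  refine osLhom_ext fun S => ?_
  rw [mulE_osE]
  have : mulSign L ∅ S = 0 := by unfold mulSign; simp
  simp [this]

lemma mulE_mulE {T U : Finset (Atoms L)} (h : Disjoint T U) :
    (mulE (R := R) T) ∘ₗ (mulE (R := R) U)
      = ((-1:R) ^ mulSign L T U) • mulE (R := R) (T ∪ U) := by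
  refine osLhom_ext fun V => ?_
  rw [LinearMap.comp_apply, LinearMap.smul_apply, mulE_osE, mulE_osE]
  by_cases hUV : Disjoint U V
  · rw [if_pos hUV, map_smul, mulE_osE]
    by_cases hTV : Disjoint T V
    · have h1 : Disjoint T (U ∪ V) := by
        rw [Finset.disjoint_union_right]; exact ⟨h, hTV⟩
      have h2 : Disjoint (T ∪ U) V := by
        rw [Finset.disjoint_union_left]; exact ⟨hTV, hUV⟩
      rw [if_pos h1, if_pos h2, smul_smul, smul_smul, ← pow_add, ← pow_add,
        mulSign_union_right hUV, mulSign_union_left h, Finset.union_assoc]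
      ring_nf
    · have h1 : ¬ Disjoint T (U ∪ V) := by
        rw [Finset.disjoint_union_right]; tauto
      have h2 : ¬ Disjoint (T ∪ U) V := by
        rw [Finset.disjoint_union_left]; tauto
      rw [if_neg h1, if_neg h2, smul_zero, smul_zero]
  · have h2 : ¬ Disjoint (T ∪ U) V := by
      rw [Finset.disjoint_union_left]; tauto
    rw [if_neg hUV, if_neg h2, map_zero, smul_zero]

lemma mulE_mulE_zero {T U : Finset (Atoms L)} (h : ¬ Disjoint T U) :
    (mulE (R := R) T) ∘ₗ (mulE (R := R) U) = 0 := by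
  refine osLhom_ext fun V => ?_
  rw [LinearMap.comp_apply, mulE_osE]
  by_cases hUV : Disjoint U V
  · rw [if_pos hUV, map_smul, mulE_osE]
    have h1 : ¬ Disjoint T (U ∪ V) := by
      rw [Finset.disjoint_union_right]; tauto
    rw [if_neg h1, smul_zero]; rfl
  · rw [if_neg hUV, map_zero]; rfl

end Ops
section Homotopy
variable {R : Type*} [CommRing R] {L : Type*} [Lattice L] [OrderBot L] [Fintype L]

lemma delSign_insert_self {a : Atoms L} {S : Finset (Atoms L)} (ha : a ∉ S) :
    delSign L (insert a S) a = delSign L S a := by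
  rw [delSign_insert ha, if_neg (lt_irrefl _), add_zero]

lemma delSign_erase_self {a : Atoms L} (S : Finset (Atoms L)) :
    delSign L (S.erase a) a = delSign L S a := by
  unfold delSign
  rw [Finset.filter_erase, Finset.erase_eq_of_notMem]
  simp

lemma neg_one_pow_double (d : ℕ) : ((-1 : R)) ^ (d + d) = 1 := by
  rw [pow_add, ← mul_pow]; simp

lemma neg_one_pow_succ_add_self (n : ℕ) : ((-1 : R)) ^ (n + 1) + ((-1 : R)) ^ n = 0 := by
  rw [pow_succ]; ring

lemma del_homotopy (a : Atoms L) :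
    osDel R L ∘ₗ mulE (R := R) {a} + mulE (R := R) {a} ∘ₗ osDel R L = LinearMap.id := by
  refine osLhom_ext fun S => ?_
  rw [LinearMap.add_apply, LinearMap.comp_apply, LinearMap.comp_apply, LinearMap.id_apply]
  by_cases ha : a ∈ S
  · have h0 : mulE (R := R) {a} (osE R L S) = 0 := by
      rw [mulE_osE, if_neg (by rw [Finset.disjoint_singleton_left]; exact fun h => h ha)]
    rw [h0, map_zero, zero_add, osDel_osE, map_sum]
    have hterm : ∀ b ∈ S, mulE (R := R) {a} (((-1:R) ^ delSign L S b) • osE R L (S.erase b))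
        = if b = a then osE R L S else 0 := by
      intro b hb
      rw [map_smul, mulE_osE]
      by_cases hba : b = a
      · subst hba
        rw [if_pos (by rw [Finset.disjoint_singleton_left]; exact Finset.notMem_erase b S),
          if_pos rfl, mulSign_singleton, delSign_erase_self, (Finset.insert_eq _ _).symm,
          Finset.insert_erase hb, smul_smul, ← pow_add, neg_one_pow_double, one_smul]
      · rw [if_neg (by
          rw [Finset.disjoint_singleton_left]
          exact fun h => h (Finset.mem_erase.2 ⟨fun e => hba e.symm, ha⟩)), smul_zero,
          if_neg hba]
    rw [Finset.sum_congr rfl hterm, Finset.sum_ite_eq' S a (fun _ => osE R L S), if_pos ha]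
  · have hd : Disjoint {a} S := Finset.disjoint_singleton_left.2 ha
    have eq1 : osDel R L (mulE (R := R) {a} (osE R L S))
        = osE R L S + ∑ b ∈ S,
            ((-1:R) ^ (delSign L S a + delSign L (insert a S) b)) •
              osE R L (insert a (S.erase b)) := by
      rw [mulE_osE, if_pos hd, mulSign_singleton, (Finset.insert_eq _ _).symm, map_smul,
        osDel_osE, Finset.sum_insert ha, smul_add, Finset.smul_sum]
      congr 1
      · rw [Finset.erase_insert ha, delSign_insert_self ha, smul_smul, ← pow_add,
          neg_one_pow_double, one_smul]
      · refine Finset.sum_congr rfl fun b hb => ?_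
        rw [smul_smul, ← pow_add,
          Finset.erase_insert_of_ne (fun e => ha (by rw [e]; exact hb))]
    have eq2 : mulE (R := R) {a} (osDel R L (osE R L S))
        = ∑ b ∈ S,
            ((-1:R) ^ (delSign L S b + delSign L (S.erase b) a)) •
              osE R L (insert a (S.erase b)) := by
      rw [osDel_osE, map_sum]
      refine Finset.sum_congr rfl fun b hb => ?_
      rw [map_smul, mulE_osE,
        if_pos (Finset.disjoint_singleton_left.2 (fun h => ha (Finset.mem_of_mem_erase h))),
        mulSign_singleton, (Finset.insert_eq _ _).symm, smul_smul, ← pow_add]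
    rw [eq1, eq2, add_assoc, ← Finset.sum_add_distrib]
    have hz : ∀ b ∈ S,
        ((-1:R) ^ (delSign L S a + delSign L (insert a S) b)) •
            osE R L (insert a (S.erase b)) +
          ((-1:R) ^ (delSign L S b + delSign L (S.erase b) a)) •
            osE R L (insert a (S.erase b)) = 0 := by
      intro b hb
      rw [← add_smul]
      have hab : a ≠ b := fun e => ha (by rw [e]; exact hb)
      have h1 : delSign L (insert a S) b
          = delSign L S b + (if elemIdx L a.val < elemIdx L b.val then 1 else 0) :=
        delSign_insert ha b
      have h2 : delSign L S a
          = delSign L (S.erase b) a + (if elemIdx L b.val < elemIdx L a.val then 1 else 0) := by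
        conv_lhs => rw [← Finset.insert_erase hb]
        rw [delSign_insert (Finset.notMem_erase b S) a]
      have hne : elemIdx L a.val ≠ elemIdx L b.val := fun e => hab (elemIdx_inj e)
      rcases lt_or_gt_of_ne hne with hlt | hlt
      · rw [if_pos hlt] at h1
        rw [if_neg (lt_asymm hlt), add_zero] at h2
        rw [h1, h2]
        have he : delSign L (S.erase b) a + (delSign L S b + 1)
            = (delSign L S b + delSign L (S.erase b) a) + 1 := by ring
        rw [he, neg_one_pow_succ_add_self, zero_smul]
      · rw [if_neg (lt_asymm hlt), add_zero] at h1
        rw [if_pos hlt] at h2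
        rw [h1, h2]
        have he : delSign L (S.erase b) a + 1 + delSign L S b
            = (delSign L S b + delSign L (S.erase b) a) + 1 := by ring
        rw [he, neg_one_pow_succ_add_self, zero_smul]
    rw [Finset.sum_congr rfl hz, Finset.sum_const_zero, add_zero]

end Homotopy
section RankLemmas
variable {L : Type*} [Lattice L] [OrderBot L] [Fintype L] (gl : GeometricLattice L)

lemma rk_mono : Monotone gl.rk := gl.rk_strictMono.monotone

lemma rk_atom (a : Atoms L) : gl.rk a.val = 1 := by
  rw [gl.rk_covby a.2.bot_covBy, gl.rk_bot]

lemma rk_sup_le_add (x y : L) : gl.rk (x ⊔ y) ≤ gl.rk x + gl.rk y := by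
  have := gl.submodular x y
  omega

lemma rk_sup_le_card (S : Finset (Atoms L)) : gl.rk (S.sup fun a => a.val) ≤ S.card := by
  classical
  induction S using Finset.induction_on with
  | empty => simp [gl.rk_bot]
  | insert _ _ ha _ =>
    rename_i a S ih
    rw [Finset.sup_insert, Finset.card_insert_of_notMem ha]
    calc gl.rk (a.val ⊔ S.sup fun a => a.val)
        ≤ gl.rk a.val + gl.rk (S.sup fun a => a.val) := rk_sup_le_add gl _ _
      _ ≤ 1 + S.card := by rw [rk_atom gl a]; omega
      _ = S.card + 1 := by omega

lemma depset_superset {S T : Finset (Atoms L)} (h : S ⊆ T)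
    (hd : IsDepSet L gl S) : IsDepSet L gl T := by
  unfold IsDepSet at *
  have hT : T = S ∪ (T \ S) := by rw [Finset.union_sdiff_of_subset h]
  have hcard : T.card = S.card + (T \ S).card := by
    rw [Finset.card_sdiff_of_subset h]; have := Finset.card_le_card h; omega
  have hsup : (T.sup fun a => a.val) = (S.sup fun a => a.val) ⊔ ((T \ S).sup fun a => a.val) := by
    conv_lhs => rw [hT]
    rw [Finset.sup_union]
  have h1 := rk_sup_le_add gl (S.sup fun a => a.val) ((T \ S).sup fun a => a.val)
  have h2 := rk_sup_le_card gl (T \ S)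
  rw [hsup]
  omega

lemma depset_nonempty {S : Finset (Atoms L)} (hd : IsDepSet L gl S) : S.Nonempty := by
  rw [← Finset.card_pos]
  unfold IsDepSet at hd
  omega

lemma depset_erase {S : Finset (Atoms L)} {b : Atoms L} (hb : b ∈ S)
    (hne : ((S.erase b).sup fun a => a.val) ≠ (S.sup fun a => a.val))
    (hd : IsDepSet L gl S) : IsDepSet L gl (S.erase b) := by
  unfold IsDepSet at *
  have hle : ((S.erase b).sup fun a => a.val) ≤ S.sup fun a => a.val :=
    Finset.sup_mono (Finset.erase_subset b S)
  have hlt := gl.rk_strictMono (lt_of_le_of_ne hle hne)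
  rw [Finset.card_erase_of_mem hb]
  have := Finset.card_pos.2 ⟨b, hb⟩
  omega

end RankLemmas

section IdealLemmas
variable {R : Type*} [CommRing R] {L : Type*} [Lattice L] [OrderBot L] [Fintype L]
  (gl : GeometricLattice L)

lemma mulE_del_of_mem {a : Atoms L} {S : Finset (Atoms L)} (ha : a ∈ S) :
    mulE (R := R) {a} (osDel R L (osE R L S)) = osE R L S := by
  have h := congrArg (fun f : OSModule R L →ₗ[R] OSModule R L => f (osE R L S))
    (del_homotopy (R := R) a)
  simp only [LinearMap.add_apply, LinearMap.comp_apply, LinearMap.id_apply] at h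
  have h0 : mulE (R := R) {a} (osE R L S) = 0 := by
    rw [mulE_osE, if_neg (by rw [Finset.disjoint_singleton_left]; exact fun h => h ha)]
  rw [h0, map_zero, zero_add] at h
  exact h

lemma osE_mem_ideal {S : Finset (Atoms L)} (hd : IsDepSet L gl S) :
    osE R L S ∈ osIdeal R L gl := by
  obtain ⟨a, ha⟩ := depset_nonempty gl hd
  rw [← mulE_del_of_mem (R := R) ha]
  exact Submodule.subset_span ⟨{a}, S, hd, rfl⟩

lemma mulE_ideal (T : Finset (Atoms L)) :
    Submodule.map (mulE (R := R) T) (osIdeal R L gl) ≤ osIdeal R L gl := by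
  unfold osIdeal
  rw [Submodule.map_span, Submodule.span_le]
  rintro x ⟨y, ⟨T', S, hd, rfl⟩, rfl⟩
  show mulE (R := R) T (mulE (R := R) T' (osDel R L (osE R L S))) ∈ _
  rw [← LinearMap.comp_apply]
  by_cases h : Disjoint T T'
  · rw [mulE_mulE h]
    exact Submodule.smul_mem _ _ (Submodule.subset_span ⟨T ∪ T', S, hd, rfl⟩)
  · rw [mulE_mulE_zero h]
    exact Submodule.zero_mem _

lemma del_del : (osDel R L) ∘ₗ (osDel R L) = 0 := by
  refine osLhom_ext fun S => ?_
  rw [LinearMap.comp_apply, LinearMap.zero_apply]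
  induction S using Finset.strongInductionOn with
  | _ S ih =>
    rcases Finset.eq_empty_or_nonempty S with rfl | ⟨a, ha⟩
    · rw [osDel_osE]
      simp
    · have hmul : mulE (R := R) {a} (osE R L (S.erase a))
          = ((-1:R) ^ delSign L (S.erase a) a) • osE R L S := by
        rw [mulE_osE,
          if_pos (Finset.disjoint_singleton_left.2 (Finset.notMem_erase a S)),
          mulSign_singleton, (Finset.insert_eq _ _).symm, Finset.insert_erase ha]
      have heS : osE R L S = ((-1:R) ^ delSign L (S.erase a) a) • mulE (R := R) {a} (osE R L (S.erase a)) := by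
        rw [hmul, smul_smul, ← pow_add, neg_one_pow_double, one_smul]
      have hom : ∀ y : OSModule R L,
          osDel R L (mulE (R := R) {a} y) + mulE (R := R) {a} (osDel R L y) = y := by
        intro y
        have h := congrArg (fun f : OSModule R L →ₗ[R] OSModule R L => f y)
          (del_homotopy (R := R) a)
        simpa using h
      rw [heS, map_smul, map_smul]
      have h1 : osDel R L (mulE (R := R) {a} (osE R L (S.erase a)))
          = osE R L (S.erase a) - mulE (R := R) {a} (osDel R L (osE R L (S.erase a))) := by
        have := hom (osE R L (S.erase a))
        rw [eq_sub_iff_add_eq]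
        exact this
      rw [h1, map_sub]
      have h2 : osDel R L (mulE (R := R) {a} (osDel R L (osE R L (S.erase a))))
          = osDel R L (osE R L (S.erase a))
            - mulE (R := R) {a} (osDel R L (osDel R L (osE R L (S.erase a)))) := by
        have := hom (osDel R L (osE R L (S.erase a)))
        rw [eq_sub_iff_add_eq]
        exact this
      rw [h2, ih (S.erase a) (Finset.erase_ssubset ha), map_zero, sub_zero, sub_self, smul_zero]

lemma del_ideal_gen {S : Finset (Atoms L)} (hd : IsDepSet L gl S) (T : Finset (Atoms L)) :
    osDel R L (mulE (R := R) T (osDel R L (osE R L S))) ∈ osIdeal R L gl := by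
  induction T using Finset.strongInductionOn with
  | _ T ih =>
    rcases Finset.eq_empty_or_nonempty T with rfl | ⟨t, ht⟩
    · rw [mulE_empty, LinearMap.id_apply, ← LinearMap.comp_apply, del_del,
        LinearMap.zero_apply]
      exact Submodule.zero_mem _
    · have hT : mulE (R := R) T (osDel R L (osE R L S))
          = ((-1:R) ^ mulSign L {t} (T.erase t)) •
              mulE (R := R) {t} (mulE (R := R) (T.erase t) (osDel R L (osE R L S))) := by
        have := mulE_mulE (R := R) (Finset.disjoint_singleton_left.2 (Finset.notMem_erase t T))
        have h2 := congrArg (fun f : OSModule R L →ₗ[R] OSModule R L =>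
          f (osDel R L (osE R L S))) this
        simp only [LinearMap.comp_apply, LinearMap.smul_apply] at h2
        rw [(Finset.insert_eq _ _).symm, Finset.insert_erase ht] at h2
        rw [h2, smul_smul, ← pow_add, neg_one_pow_double, one_smul]
      rw [hT, map_smul]
      set z := mulE (R := R) (T.erase t) (osDel R L (osE R L S)) with hz
      have hom : osDel R L (mulE (R := R) {t} z) + mulE (R := R) {t} (osDel R L z) = z := by
        have h := congrArg (fun f : OSModule R L →ₗ[R] OSModule R L => f z)
          (del_homotopy (R := R) t)
        simpa using h
      have h1 : osDel R L (mulE (R := R) {t} z) = z - mulE (R := R) {t} (osDel R L z) := by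
        rw [eq_sub_iff_add_eq]; exact hom
      rw [h1]
      have hzI : z ∈ osIdeal R L gl := Submodule.subset_span ⟨T.erase t, S, hd, rfl⟩
      have hdzI : osDel R L z ∈ osIdeal R L gl := ih (T.erase t) (Finset.erase_ssubset ht)
      have hmzI : mulE (R := R) {t} (osDel R L z) ∈ osIdeal R L gl :=
        mulE_ideal gl {t} ⟨_, hdzI, rfl⟩
      exact Submodule.smul_mem _ _ (Submodule.sub_mem _ hzI hmzI)

lemma del_ideal : Submodule.map (osDel R L) (osIdeal R L gl) ≤ osIdeal R L gl := by
  unfold osIdeal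
  rw [Submodule.map_span, Submodule.span_le]
  rintro x ⟨y, ⟨T, S, hd, rfl⟩, rfl⟩
  exact del_ideal_gen gl hd T

end IdealLemmas
section Uniform
variable {R : Type*} [CommRing R] {L : Type*} [Lattice L] [OrderBot L] [Fintype L]
  (gl : GeometricLattice L)

/-- a dependent set all of whose one-element deletions have the same join -/
def UniformDep (S : Finset (Atoms L)) : Prop :=
  IsDepSet L gl S ∧ ∀ b ∈ S, ((S.erase b).sup fun a => a.val) = S.sup fun a => a.val

/-- span of generators with uniform dependent sets -/
noncomputable def osIdealU : Submodule R (OSModule R L) :=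
  Submodule.span R {x | ∃ (T S : Finset (Atoms L)), UniformDep gl S ∧
    x = mulE (R := R) T (osDel R L (osE R L S))}

lemma mulE_idealU (T : Finset (Atoms L)) :
    Submodule.map (mulE (R := R) T) (osIdealU (R := R) gl) ≤ osIdealU (R := R) gl := by
  unfold osIdealU
  rw [Submodule.map_span, Submodule.span_le]
  rintro x ⟨y, ⟨T', S, hd, rfl⟩, rfl⟩
  show mulE (R := R) T (mulE (R := R) T' (osDel R L (osE R L S))) ∈ _
  rw [← LinearMap.comp_apply]
  by_cases h : Disjoint T T'
  · rw [mulE_mulE h]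
    exact Submodule.smul_mem _ _ (Submodule.subset_span ⟨T ∪ T', S, hd, rfl⟩)
  · rw [mulE_mulE_zero h]
    exact Submodule.zero_mem _

lemma osE_smul_decomp {S : Finset (Atoms L)} {b : Atoms L} (hb : b ∈ S) :
    osE R L S = ((-1:R) ^ delSign L (S.erase b) b) • mulE (R := R) {b} (osE R L (S.erase b)) := by
  rw [mulE_osE, if_pos (Finset.disjoint_singleton_left.2 (Finset.notMem_erase b S)),
    mulSign_singleton, (Finset.insert_eq _ _).symm, Finset.insert_erase hb,
    smul_smul, ← pow_add, neg_one_pow_double, one_smul]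

lemma osE_mem_idealU {S : Finset (Atoms L)} (hd : IsDepSet L gl S) :
    osE R L S ∈ osIdealU (R := R) gl := by
  induction S using Finset.strongInductionOn with
  | _ S ih =>
    by_cases hu : UniformDep gl S
    · obtain ⟨a, ha⟩ := depset_nonempty gl hd
      rw [← mulE_del_of_mem (R := R) ha]
      exact Submodule.subset_span ⟨{a}, S, hu, rfl⟩
    · unfold UniformDep at hu
      push_neg at hu
      obtain ⟨b, hb, hne⟩ := hu hd
      have hd' := depset_erase gl hb hne hd
      rw [osE_smul_decomp (R := R) hb]
      exact Submodule.smul_mem _ _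
        (mulE_idealU gl {b} ⟨_, ih (S.erase b) (Finset.erase_ssubset hb) hd', rfl⟩)

lemma gen_mem_idealU {S : Finset (Atoms L)} (hd : IsDepSet L gl S) :
    ∀ T, mulE (R := R) T (osDel R L (osE R L S)) ∈ osIdealU (R := R) gl := by
  induction S using Finset.strongInductionOn with
  | _ S ih =>
    intro T
    by_cases hu : UniformDep gl S
    · exact Submodule.subset_span ⟨T, S, hu, rfl⟩
    · unfold UniformDep at hu
      push_neg at hu
      obtain ⟨b, hb, hne⟩ := hu hd
      have hd' := depset_erase gl hb hne hd
      have hom : osDel R L (mulE (R := R) {b} (osE R L (S.erase b)))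
          + mulE (R := R) {b} (osDel R L (osE R L (S.erase b))) = osE R L (S.erase b) := by
        have h := congrArg (fun f : OSModule R L →ₗ[R] OSModule R L =>
          f (osE R L (S.erase b))) (del_homotopy (R := R) b)
        simpa using h
      have hdecomp : osDel R L (osE R L S)
          = ((-1:R) ^ delSign L (S.erase b) b) •
              (osE R L (S.erase b) - mulE (R := R) {b} (osDel R L (osE R L (S.erase b)))) := by
        rw [osE_smul_decomp (R := R) hb, map_smul]
        congr 1
        rw [eq_sub_iff_add_eq]
        exact hom
      rw [hdecomp, map_smul, map_sub]
      refine Submodule.smul_mem _ _ (Submodule.sub_mem _ ?_ ?_)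
      · rw [mulE_osE]
        by_cases hdis : Disjoint T (S.erase b)
        · rw [if_pos hdis]
          refine Submodule.smul_mem _ _ (osE_mem_idealU gl ?_)
          exact depset_superset gl Finset.subset_union_right hd'
        · rw [if_neg hdis]; exact Submodule.zero_mem _
      · rw [← LinearMap.comp_apply]
        by_cases hdis : Disjoint T {b}
        · rw [mulE_mulE hdis]
          exact Submodule.smul_mem _ _ (ih (S.erase b) (Finset.erase_ssubset hb) hd' (T ∪ {b}))
        · rw [mulE_mulE_zero hdis]
          exact Submodule.zero_mem _

lemma osIdeal_eq_idealU : osIdeal R L gl = osIdealU (R := R) gl := by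
  apply le_antisymm
  · unfold osIdeal
    rw [Submodule.span_le]
    rintro x ⟨T, S, hd, rfl⟩
    exact gen_mem_idealU gl hd T
  · unfold osIdealU
    rw [Submodule.span_le]
    rintro x ⟨T, S, hu, rfl⟩
    exact Submodule.subset_span ⟨T, S, hu.1, rfl⟩

end Uniform
section Filtering
variable {R : Type*} [CommRing R] {L : Type*} [Lattice L] [OrderBot L] [Fintype L]
  (gl : GeometricLattice L)

/-- coordinate filtering as a linear map -/
noncomputable def filterLM (P : Finset (Atoms L) → Prop) [DecidablePred P] :
    OSModule R L →ₗ[R] OSModule R L where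
  toFun := Finsupp.filter P
  map_add' := fun _ _ => Finsupp.filter_add
  map_smul' := fun _ _ => Finsupp.filter_smul

/-- the span of basis vectors indexed by `B` -/
noncomputable def EB (B : Set (Finset (Atoms L))) : Submodule R (OSModule R L) :=
  Finsupp.supported R R B

lemma mem_EB {B : Set (Finset (Atoms L))} {x : OSModule R L} :
    x ∈ EB (R := R) (L := L) B ↔ ↑(Finsupp.support x) ⊆ B :=
  Finsupp.mem_supported R x

lemma osE_mem_EB {B : Set (Finset (Atoms L))} {S : Finset (Atoms L)} (h : S ∈ B) :
    osE R L S ∈ EB (R := R) (L := L) B := by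
  rw [mem_EB]
  exact fun W hW => by
    have := Finsupp.support_single_subset (Finset.mem_coe.1 hW)
    simp only [Finset.mem_singleton] at this
    rwa [this]

lemma filterLM_eq_self {P : Finset (Atoms L) → Prop} [DecidablePred P]
    {B : Set (Finset (Atoms L))} {x : OSModule R L} (hx : x ∈ EB (R := R) (L := L) B)
    (h : ∀ W ∈ B, P W) : filterLM (R := R) P x = x := by
  refine Finsupp.ext fun W => ?_
  show Finsupp.filter P x W = Finsupp.toFun x W
  erw [Finsupp.filter_apply]
  split
  · rfl
  · rename_i hPW
    by_contra hne
    have hW : W ∈ x.support := Finsupp.mem_support_iff.2 fun e => hne e.symm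
    exact hPW (h W (mem_EB.1 hx hW))

lemma filterLM_eq_zero {P : Finset (Atoms L) → Prop} [DecidablePred P]
    {B : Set (Finset (Atoms L))} {x : OSModule R L} (hx : x ∈ EB (R := R) (L := L) B)
    (h : ∀ W ∈ B, ¬ P W) : filterLM (R := R) P x = 0 := by
  refine Finsupp.ext fun W => ?_
  show Finsupp.filter P x W = (0 : Finset (Atoms L) →₀ R) W
  erw [Finsupp.filter_apply]
  split
  · rename_i hPW
    by_contra hne
    have hW : W ∈ x.support := Finsupp.mem_support_iff.2 hne
    exact h W (mem_EB.1 hx hW) hPW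
  · rfl

/-- every generator with uniform dependent `S` is homogeneous of bidegree
`(sup T ⊔ sup S, card T + (card S - 1))`. -/
lemma gen_mem_EB {S : Finset (Atoms L)} (hu : UniformDep gl S) (T : Finset (Atoms L)) :
    mulE (R := R) T (osDel R L (osE R L S)) ∈
      EB (R := R) (L := L) {W | (W.sup fun a => a.val) = (T.sup fun a => a.val) ⊔ (S.sup fun a => a.val)
        ∧ W.card = T.card + (S.card - 1)} := by
  rw [osDel_osE, map_sum]
  refine Submodule.sum_mem _ fun b hb => ?_
  rw [map_smul, mulE_osE]
  by_cases hdis : Disjoint T (S.erase b)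
  · rw [if_pos hdis]
    refine Submodule.smul_mem _ _ (Submodule.smul_mem _ _ (osE_mem_EB ?_))
    constructor
    · rw [Finset.sup_union, hu.2 b hb]
    · rw [Finset.card_union_of_disjoint hdis, Finset.card_erase_of_mem hb]
  · rw [if_neg hdis, smul_zero]
    exact Submodule.zero_mem _

/-- the Orlik–Solomon ideal is stable under filtering by any predicate that only
depends on the join and the cardinality of the indexing set. -/
lemma filterLM_ideal {P : Finset (Atoms L) → Prop} [DecidablePred P]
    (hP : ∀ W W' : Finset (Atoms L), (W.sup fun a => a.val) = (W'.sup fun a => a.val) →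
      W.card = W'.card → (P W ↔ P W')) :
    Submodule.map (filterLM (R := R) P) (osIdeal R L gl) ≤ osIdeal R L gl := by
  rw [osIdeal_eq_idealU]
  unfold osIdealU
  rw [Submodule.map_span, Submodule.span_le]
  rintro x ⟨y, ⟨T, S, hu, rfl⟩, rfl⟩
  have hEB := gen_mem_EB (R := R) gl hu T
  set B := {W : Finset (Atoms L) | (W.sup fun a => a.val) = (T.sup fun a => a.val) ⊔ (S.sup fun a => a.val)
        ∧ W.card = T.card + (S.card - 1)} with hB
  have hconst : (∀ W ∈ B, P W) ∨ (∀ W ∈ B, ¬ P W) := by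
    by_cases hex : ∃ W ∈ B, P W
    · obtain ⟨W₀, hW₀, hPW₀⟩ := hex
      exact Or.inl fun W hW => (hP W W₀ (hW.1.trans hW₀.1.symm) (hW.2.trans hW₀.2.symm)).2 hPW₀
    · push_neg at hex
      exact Or.inr hex
  rcases hconst with h | h
  · rw [filterLM_eq_self (R := R) hEB h]
    exact Submodule.subset_span ⟨T, S, hu, rfl⟩
  · rw [filterLM_eq_zero (R := R) hEB h]
    exact Submodule.zero_mem _

end Filtering
section Dimension
variable {K : Type*} [Field K] {L : Type*} [Lattice L] [OrderBot L] [Fintype L]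
  (gl : GeometricLattice L)

noncomputable instance : Module.Finite K (OSModule K L) :=
  inferInstanceAs (Module.Finite K (Finset (Atoms L) →₀ K))

lemma finrank_EB (B : Set (Finset (Atoms L))) :
    Module.finrank K (EB (R := K) (L := L) B) = B.toFinset.card := by
  rw [Set.toFinset_card]
  exact (LinearEquiv.finrank_eq (Finsupp.supportedEquivFinsupp (M := K) (R := K) B)).trans
    (Module.finrank_finsupp_self K)

lemma finrank_map_add_inf_ker {V W : Type*} [AddCommGroup V] [Module K V]
    [AddCommGroup W] [Module K W] [FiniteDimensional K V]
    (f : V →ₗ[K] W) (p : Submodule K V) :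
    Module.finrank K (Submodule.map f p) + Module.finrank K (p ⊓ LinearMap.ker f : Submodule K V)
      = Module.finrank K p := by
  have h := LinearMap.finrank_range_add_finrank_ker (f.domRestrict p)
  rw [LinearMap.range_domRestrict] at h
  rw [← h]
  congr 1
  rw [LinearMap.ker_domRestrict]
  have he : Submodule.comap p.subtype (LinearMap.ker f)
      = Submodule.comap p.subtype (p ⊓ LinearMap.ker f) := by
    ext x
    simp only [Submodule.mem_comap, Submodule.mem_inf]
    exact ⟨fun h => ⟨x.2, h⟩, fun h => h.2⟩
  rw [he]
  exact (LinearEquiv.finrank_eq (Submodule.comapSubtypeEquivOfLe inf_le_left)).symm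

lemma ker_filterLM (P : Finset (Atoms L) → Prop) [DecidablePred P] :
    LinearMap.ker (filterLM (R := K) (L := L) P) = EB (R := K) {S | ¬ P S} := by
  ext x
  rw [LinearMap.mem_ker, mem_EB]
  constructor
  · intro h W hW
    intro hPW
    have : Finsupp.filter P x W = 0 := by rw [show Finsupp.filter P x = 0 from h]; rfl
    erw [Finsupp.filter_apply, if_pos hPW] at this
    exact Finsupp.mem_support_iff.1 hW this
  · intro h
    refine Finsupp.ext fun W => ?_
    show Finsupp.filter P x W = (0 : Finset (Atoms L) →₀ K) W
    erw [Finsupp.filter_apply]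
    split
    · rename_i hPW
      by_contra hne
      exact h (Finsupp.mem_support_iff.2 hne) hPW
    · rfl

lemma filterLM_EB (P : Finset (Atoms L) → Prop) [DecidablePred P]
    (B : Set (Finset (Atoms L))) :
    Submodule.map (filterLM (R := K) P) (EB (R := K) (L := L) B) ≤ EB (R := K) B := by
  rintro x ⟨y, hy, rfl⟩
  rw [mem_EB]
  intro W hW
  have : W ∈ (Finsupp.filter P y).support := hW
  erw [Finsupp.support_filter, Finset.mem_filter] at this
  exact mem_EB.1 hy this.1

lemma finrank_split (P : Finset (Atoms L) → Prop) [DecidablePred P]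
    (W : Submodule K (OSModule K L))
    (hW : Submodule.map (filterLM (R := K) P) W ≤ W) :
    Module.finrank K W
      = Module.finrank K (W ⊓ EB (R := K) {S | P S} : Submodule K (OSModule K L))
        + Module.finrank K (W ⊓ EB (R := K) {S | ¬ P S} : Submodule K (OSModule K L)) := by
  have h := finrank_map_add_inf_ker (filterLM (R := K) (L := L) P) W
  rw [ker_filterLM] at h
  have hmap : Submodule.map (filterLM (R := K) P) W = W ⊓ EB (R := K) {S | P S} := by
    apply le_antisymm
    · refine le_inf hW ?_
      rintro x ⟨y, hy, rfl⟩
      rw [mem_EB]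
      intro V hV
      have : V ∈ (Finsupp.filter P y).support := hV
      erw [Finsupp.support_filter, Finset.mem_filter] at this
      exact this.2
    · rintro x ⟨hxW, hxB⟩
      exact ⟨x, hxW, filterLM_eq_self (R := K) hxB (fun _ h => h)⟩
  rw [hmap] at h
  omega

lemma EB_inter (A B : Set (Finset (Atoms L))) :
    EB (R := K) (L := L) A ⊓ EB (R := K) B = EB (R := K) (A ∩ B) := by
  ext x
  simp only [Submodule.mem_inf, mem_EB, Set.subset_inter_iff]

lemma EB_mono {A B : Set (Finset (Atoms L))} (h : A ⊆ B) :
    EB (R := K) (L := L) A ≤ EB (R := K) B :=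
  Finsupp.supported_mono h

/-- splitting the dimension of a homogeneous submodule along a partition of degrees -/
lemma finrank_partition (v : Finset (Atoms L) → (L × ℕ)) (J : Finset (L × ℕ))
    (W : Submodule K (OSModule K L))
    (h1 : W ≤ EB (R := K) {S | v S ∈ J})
    (h2 : ∀ j : L × ℕ, Submodule.map (filterLM (R := K) (fun S => v S = j)) W ≤ W) :
    Module.finrank K W
      = ∑ j ∈ J, Module.finrank K (W ⊓ EB (R := K) {S | v S = j} : Submodule K (OSModule K L)) := by
  classical
  induction J using Finset.induction_on generalizing W with
  | empty =>
    have : W = ⊥ := by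
      refine le_bot_iff.1 (le_trans h1 ?_)
      intro x hx
      rw [mem_EB] at hx
      have hsupp : x.support = ∅ := by
        rw [← Finset.subset_empty]
        intro a ha
        exact absurd (hx ha) (by simp)
      show x = (0 : Finset (Atoms L) →₀ K)
      exact Finsupp.support_eq_empty.1 hsupp
    rw [this]
    simp [finrank_bot]
  | @insert j J hj ih =>
    rw [Finset.sum_insert hj]
    rw [finrank_split (fun S => v S = j) W (h2 j)]
    congr 1
    set W' := W ⊓ EB (R := K) {S | ¬ v S = j} with hW'
    have h1' : W' ≤ EB (R := K) {S | v S ∈ J} := by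
      calc W' ≤ EB (R := K) {S | v S ∈ insert j J} ⊓ EB (R := K) {S | ¬ v S = j} :=
            inf_le_inf_right _ h1
        _ = EB (R := K) ({S | v S ∈ insert j J} ∩ {S | ¬ v S = j}) := EB_inter _ _
        _ ≤ EB (R := K) {S | v S ∈ J} := by
            refine EB_mono fun S hS => ?_
            obtain ⟨hSm, hSne⟩ := hS
            rcases Finset.mem_insert.1 hSm with h | h
            · exact absurd h hSne
            · exact h
    have h2' : ∀ j' : L × ℕ, Submodule.map (filterLM (R := K) (fun S => v S = j')) W' ≤ W' := by
      intro j'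
      calc Submodule.map (filterLM (R := K) (fun S => v S = j')) W'
          ≤ Submodule.map (filterLM (R := K) (fun S => v S = j')) W
            ⊓ Submodule.map (filterLM (R := K) (fun S => v S = j'))
                (EB (R := K) {S | ¬ v S = j}) := Submodule.map_inf_le _
        _ ≤ W ⊓ EB (R := K) {S | ¬ v S = j} :=
            inf_le_inf (h2 j') (filterLM_EB _ _)
    rw [ih W' h1' h2']
    refine Finset.sum_congr rfl fun j' hj' => ?_
    have : W' ⊓ EB (R := K) {S | v S = j'} = W ⊓ EB (R := K) {S | v S = j'} := by
      rw [hW', inf_assoc, EB_inter]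
      congr 2
      ext S
      simp only [Set.mem_inter_iff, Set.mem_setOf_eq]
      constructor
      · rintro ⟨-, h⟩; exact h
      · intro h
        refine ⟨fun hvj => hj ?_, h⟩
        have hjj : j = j' := by rw [← hvj, h]
        rwa [hjj]
    rw [this]

end Dimension
section Euler
variable {K : Type*} [Field K] {V : Type*} [AddCommGroup V] [Module K V]
  [FiniteDimensional K V]

lemma euler_aux (W : ℕ → Submodule K V) (h d : V →ₗ[K] V)
    (hom : ∀ x, d (h x) + h (d x) = x)
    (hh : ∀ x, h (h x) = 0)
    (hWh : ∀ k, Submodule.map h (W k) ≤ W (k + 1))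
    (hWd : ∀ k, Submodule.map d (W (k + 1)) ≤ W k)
    (hW0 : Submodule.map d (W 0) = ⊥) :
    ∀ n, ∑ k ∈ Finset.range (n + 1), (-1 : ℤ) ^ k * (Module.finrank K (W k) : ℤ)
      = (-1 : ℤ) ^ n * (Module.finrank K (Submodule.map h (W n)) : ℤ) := by
  have hker : ∀ k, W (k + 1) ⊓ LinearMap.ker h = Submodule.map h (W k) := by
    intro k
    apply le_antisymm
    · intro x hx
      rw [Submodule.mem_inf] at hx
      obtain ⟨hx, hxk⟩ := hx
      rw [LinearMap.mem_ker] at hxk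
      have hx2 : x = h (d x) := by
        have := hom x
        rw [hxk, map_zero, zero_add] at this
        exact this.symm
      exact hx2 ▸ Submodule.mem_map_of_mem (hWd k ⟨x, hx, rfl⟩)
    · rintro x ⟨y, hy, rfl⟩
      exact ⟨hWh k ⟨y, hy, rfl⟩, LinearMap.mem_ker.2 (hh y)⟩
  have hker0 : W 0 ⊓ LinearMap.ker h = ⊥ := by
    apply le_bot_iff.1 ?_
    intro x hx
    rw [Submodule.mem_inf] at hx
    obtain ⟨hx, hxk⟩ := hx
    rw [LinearMap.mem_ker] at hxk
    have hx2 : x = h (d x) := by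
      have := hom x
      rw [hxk, map_zero, zero_add] at this
      exact this.symm
    have : d x = 0 := by
      have := hW0 ▸ Submodule.mem_map_of_mem (f := d) hx
      simpa using this
    rw [this, map_zero] at hx2
    simp [hx2]
  intro n
  induction n with
  | zero =>
    have := finrank_map_add_inf_ker (K := K) h (W 0)
    rw [hker0, finrank_bot, add_zero] at this
    rw [zero_add, Finset.sum_range_one, this]
  | succ n ih =>
    rw [Finset.sum_range_succ, ih]
    have hr := finrank_map_add_inf_ker (K := K) h (W (n + 1))
    rw [hker n] at hr
    have : (Module.finrank K (W (n+1)) : ℤ)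
        = (Module.finrank K (Submodule.map h (W (n+1))) : ℤ)
          + (Module.finrank K (Submodule.map h (W n)) : ℤ) := by
      exact_mod_cast hr.symm
    rw [this, pow_succ]
    ring

lemma euler_zero (W : ℕ → Submodule K V) (h d : V →ₗ[K] V)
    (hom : ∀ x, d (h x) + h (d x) = x)
    (hh : ∀ x, h (h x) = 0)
    (hWh : ∀ k, Submodule.map h (W k) ≤ W (k + 1))
    (hWd : ∀ k, Submodule.map d (W (k + 1)) ≤ W k)
    (hW0 : Submodule.map d (W 0) = ⊥)
    {n : ℕ} (hn : W n = ⊥) :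
    ∑ k ∈ Finset.range (n + 1), (-1 : ℤ) ^ k * (Module.finrank K (W k) : ℤ) = 0 := by
  rw [euler_aux W h d hom hh hWh hWd hW0 n, hn, Submodule.map_bot, finrank_bot]
  simp

end Euler
section Assembly
variable {K : Type*} [Field K] {L : Type*} [Lattice L] [OrderBot L] [Fintype L]
  (gl : GeometricLattice L)

/-- the bidegree of a monomial -/
noncomputable def vdeg (S : Finset (Atoms L)) : L × ℕ := ((S.sup fun a => a.val), S.card)

lemma osPiece_eq_EB (l : L) :
    osPiece K L l = EB (R := K) {S | (S.sup fun a => a.val) = l} := by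
  unfold osPiece EB
  rw [Finsupp.supported_eq_span_single]
  congr 1
  ext x
  constructor
  · rintro ⟨S, hS, rfl⟩
    exact ⟨S, hS, rfl⟩
  · rintro ⟨S, hS, rfl⟩
    exact ⟨S, hS, rfl⟩

lemma ideal_stable (j : L × ℕ) :
    Submodule.map (filterLM (R := K) (fun S => vdeg S = j)) (osIdeal K L gl)
      ≤ osIdeal K L gl := by
  refine filterLM_ideal gl ?_
  intro W W' h1 h2
  unfold vdeg
  rw [h1, h2]

lemma depset_two_le {S : Finset (Atoms L)} (hd : IsDepSet L gl S) : 2 ≤ S.card := by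
  unfold IsDepSet at hd
  by_contra hlt
  push_neg at hlt
  interval_cases h : S.card
  · omega
  · obtain ⟨a, ha⟩ := Finset.card_eq_one.1 h
    rw [ha] at hd
    rw [Finset.sup_singleton] at hd
    rw [rk_atom gl a] at hd
    simp at hd

lemma ideal_le_EB_nonempty :
    osIdeal K L gl ≤ EB (R := K) {S | S ≠ ∅} := by
  unfold osIdeal
  rw [Submodule.span_le]
  rintro x ⟨T, S, hd, rfl⟩
  rw [osDel_osE, map_sum]
  refine Submodule.sum_mem _ fun b hb => ?_
  rw [map_smul, mulE_osE]
  by_cases hdis : Disjoint T (S.erase b)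
  · rw [if_pos hdis]
    refine Submodule.smul_mem _ _ (Submodule.smul_mem _ _ (osE_mem_EB ?_))
    have h2 := depset_two_le gl hd
    have : (S.erase b).Nonempty := by
      rw [← Finset.card_pos, Finset.card_erase_of_mem hb]
      omega
    obtain ⟨c, hc⟩ := this
    intro he
    have : c ∈ T ∪ S.erase b := Finset.mem_union_right T hc
    rw [he] at this
    exact absurd this (Finset.notMem_empty c)
  · rw [if_neg hdis, smul_zero]
    exact Submodule.zero_mem _

lemma sup_eq_bot_imp {S : Finset (Atoms L)} (h : (S.sup fun a => a.val) = ⊥) :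
    S = ∅ := by
  by_contra hne
  obtain ⟨a, ha⟩ := Finset.nonempty_iff_ne_empty.2 hne
  have := Finset.le_sup (f := fun (a : Atoms L) => a.val) ha
  rw [h, le_bot_iff] at this
  exact a.2.1 this

end Assembly
section Assembly2
variable {K : Type*} [Field K] {L : Type*} [Lattice L] [OrderBot L] [Fintype L]
  (gl : GeometricLattice L)

lemma piece_inf_vdeg (l : L) (k : ℕ) :
    osPiece K L l ⊓ EB (R := K) {S | vdeg S = (l, k)} = EB (R := K) {S | vdeg S = (l, k)} := by
  rw [osPiece_eq_EB]
  refine inf_eq_right.2 (EB_mono fun S hS => ?_)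
  have : (S.sup fun a => a.val) = l := congrArg Prod.fst hS
  exact this

lemma finrank_osPiece_split (l : L) :
    Module.finrank K (osPiece K L l)
      = ∑ k ∈ Finset.range (Fintype.card (Atoms L) + 1),
          Module.finrank K (EB (R := K) (L := L) {S | vdeg S = (l, k)}) := by
  rw [finrank_partition vdeg ({l} ×ˢ Finset.range (Fintype.card (Atoms L) + 1)) (osPiece K L l)
    (by
      rw [osPiece_eq_EB]
      refine EB_mono fun S hS => ?_
      simp only [Set.mem_setOf_eq, Finset.mem_product]
      exact ⟨Finset.mem_singleton.2 hS, Finset.mem_range.2 (by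
        show S.card < _
        have := Finset.card_le_univ S; omega)⟩)
    (fun j => by rw [osPiece_eq_EB]; exact filterLM_EB _ _)]
  rw [Finset.sum_product, Finset.sum_singleton]
  exact Finset.sum_congr rfl fun k _ => by rw [piece_inf_vdeg]

lemma finrank_ideal_piece_split (l : L) :
    Module.finrank K (osIdeal K L gl ⊓ osPiece K L l : Submodule K (OSModule K L))
      = ∑ k ∈ Finset.range (Fintype.card (Atoms L) + 1),
          Module.finrank K
            (osIdeal K L gl ⊓ EB (R := K) {S | vdeg S = (l, k)} : Submodule K (OSModule K L)) := by
  rw [finrank_partition vdeg ({l} ×ˢ Finset.range (Fintype.card (Atoms L) + 1))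
    (osIdeal K L gl ⊓ osPiece K L l)
    (by
      refine le_trans inf_le_right ?_
      rw [osPiece_eq_EB]
      refine EB_mono fun S hS => ?_
      simp only [Set.mem_setOf_eq, Finset.mem_product]
      exact ⟨Finset.mem_singleton.2 hS, Finset.mem_range.2 (by
        show S.card < _
        have := Finset.card_le_univ S; omega)⟩)
    (fun j => by
      refine le_trans (Submodule.map_inf_le _) (inf_le_inf (ideal_stable gl j) ?_)
      rw [osPiece_eq_EB]; exact filterLM_EB _ _)]
  rw [Finset.sum_product, Finset.sum_singleton]
  refine Finset.sum_congr rfl fun k _ => ?_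
  rw [inf_assoc, piece_inf_vdeg]

lemma vdeg_empty_of_lt {l : L} {k : ℕ} (hk : k < gl.rk l) :
    {S : Finset (Atoms L) | vdeg S = (l, k)} = ∅ := by
  ext S
  simp only [Set.mem_setOf_eq, Set.mem_empty_iff_false, iff_false]
  intro hS
  have h1 : (S.sup fun a => a.val) = l := congrArg Prod.fst hS
  have h2 : S.card = k := congrArg Prod.snd hS
  have := rk_sup_le_card gl S
  rw [h1, h2] at this
  omega

lemma EB_le_ideal_of_gt {l : L} {k : ℕ} (hk : gl.rk l < k) :
    EB (R := K) (L := L) {S | vdeg S = (l, k)} ≤ osIdeal K L gl := by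
  unfold EB
  erw [Finsupp.supported_eq_span_single, Submodule.span_le]
  rintro x ⟨S, hS, rfl⟩
  have h1 : (S.sup fun a => a.val) = l := congrArg Prod.fst hS
  have h2 : S.card = k := congrArg Prod.snd hS
  refine osE_mem_ideal gl ?_
  unfold IsDepSet
  rw [h1, h2]
  exact hk

lemma vanish_of_ne {l : L} {k : ℕ} (hk : k ≠ gl.rk l) :
    Module.finrank K (EB (R := K) (L := L) {S | vdeg S = (l, k)})
      = Module.finrank K
          (osIdeal K L gl ⊓ EB (R := K) {S | vdeg S = (l, k)} : Submodule K (OSModule K L)) := by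
  rcases lt_or_gt_of_ne hk with hlt | hgt
  · have he : EB (R := K) (L := L) {S | vdeg S = (l, k)} = ⊥ := by
      rw [vdeg_empty_of_lt gl hlt]
      exact Finsupp.supported_empty
    rw [he, inf_bot_eq]
  · rw [inf_eq_right.2 (EB_le_ideal_of_gt gl hgt)]

lemma key_l (l : L) :
    (-1 : ℤ) ^ gl.rk l
        * (Module.finrank K (Submodule.map (osIdeal K L gl).mkQ (osPiece K L l)) : ℤ)
      = ∑ k ∈ Finset.range (Fintype.card (Atoms L) + 1),
          (-1 : ℤ) ^ k *
            ((Module.finrank K (EB (R := K) (L := L) {S | vdeg S = (l, k)}) : ℤ)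
              - (Module.finrank K
                  (osIdeal K L gl ⊓ EB (R := K) {S | vdeg S = (l, k)} :
                    Submodule K (OSModule K L)) : ℤ)) := by
  have hd := finrank_map_add_inf_ker (K := K) (osIdeal K L gl).mkQ (osPiece K L l)
  rw [Submodule.ker_mkQ] at hd
  have hd' : (Module.finrank K (Submodule.map (osIdeal K L gl).mkQ (osPiece K L l)) : ℤ)
      = (Module.finrank K (osPiece K L l) : ℤ)
        - (Module.finrank K (osIdeal K L gl ⊓ osPiece K L l : Submodule K (OSModule K L)) : ℤ) := by
    rw [inf_comm] at hd
    omega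
  rw [hd', finrank_osPiece_split, finrank_ideal_piece_split]
  push_cast
  rw [← Finset.sum_sub_distrib, Finset.mul_sum]
  refine Finset.sum_congr rfl fun k _ => ?_
  by_cases hk : k = gl.rk l
  · rw [hk]
  · rw [vanish_of_ne gl hk]
    ring

lemma d_bot : Module.finrank K (Submodule.map (osIdeal K L gl).mkQ (osPiece K L ⊥)) = 1 := by
  have hd := finrank_map_add_inf_ker (K := K) (osIdeal K L gl).mkQ (osPiece K L ⊥)
  rw [Submodule.ker_mkQ] at hd
  have hset : {S : Finset (Atoms L) | (S.sup fun a => a.val) = ⊥} = {∅} := by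
    ext S
    simp only [Set.mem_setOf_eq, Set.mem_singleton_iff]
    constructor
    · exact sup_eq_bot_imp
    · rintro rfl
      exact Finset.sup_empty
  have h1 : Module.finrank K (osPiece K L ⊥) = 1 := by
    rw [osPiece_eq_EB, hset, finrank_EB]
    simp
  have h2 : osPiece K L ⊥ ⊓ osIdeal K L gl = ⊥ := by
    apply le_bot_iff.1
    calc osPiece K L ⊥ ⊓ osIdeal K L gl
        ≤ EB (R := K) {S | (S.sup fun a => a.val) = ⊥} ⊓ EB (R := K) {S | S ≠ ∅} := by
          rw [← osPiece_eq_EB]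
          exact inf_le_inf (le_refl _) (ideal_le_EB_nonempty gl)
      _ = EB (R := K) ({S | (S.sup fun a => a.val) = ⊥} ∩ {S | S ≠ ∅}) := EB_inter _ _
      _ ≤ ⊥ := by
          have : ({S : Finset (Atoms L) | (S.sup fun a => a.val) = ⊥} ∩ {S | S ≠ ∅}) = ∅ := by
            rw [hset]
            ext S
            simp only [Set.mem_inter_iff, Set.mem_singleton_iff, Set.mem_setOf_eq]
            tauto
          erw [this, ← Finsupp.supported_empty (M := K) (R := K)]
          exact le_refl _
  rw [h2, finrank_bot, add_zero] at hd
  rw [hd, h1]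

end Assembly2
section Complexes
variable {K : Type*} [Field K] {L : Type*} [Lattice L] [OrderBot L] [Fintype L]
  (gl : GeometricLattice L)

/-- the subspace of monomials of join `≤ q` and cardinality `k` -/
noncomputable def Fq (q : L) (k : ℕ) : Submodule K (OSModule K L) :=
  EB (R := K) {S | (S.sup fun a => a.val) ≤ q ∧ S.card = k}

lemma Fq_h {q : L} (a : Atoms L) (haq : a.val ≤ q) (k : ℕ) :
    Submodule.map (mulE (R := K) {a}) (Fq (K := K) q k) ≤ Fq (K := K) q (k + 1) := by
  unfold Fq EB
  erw [Finsupp.supported_eq_span_single, Submodule.map_span, Submodule.span_le]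
  rintro x ⟨y, ⟨S, hS, rfl⟩, rfl⟩
  show mulE (R := K) {a} (osE K L S) ∈ Finsupp.supported K K _
  rw [mulE_osE]
  by_cases hdis : Disjoint {a} S
  · rw [if_pos hdis]
    refine Submodule.smul_mem _ _ (osE_mem_EB ?_)
    have ha : a ∉ S := Finset.disjoint_singleton_left.1 hdis
    constructor
    · rw [Finset.sup_union, Finset.sup_singleton]
      exact sup_le haq hS.1
    · rw [Finset.card_union_of_disjoint hdis, Finset.card_singleton, hS.2]
      omega
  · rw [if_neg hdis]
    exact Submodule.zero_mem _

lemma Fq_d {q : L} (k : ℕ) :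
    Submodule.map (osDel K L) (Fq (K := K) q (k + 1)) ≤ Fq (K := K) q k := by
  unfold Fq EB
  erw [Finsupp.supported_eq_span_single, Submodule.map_span, Submodule.span_le]
  rintro x ⟨y, ⟨S, hS, rfl⟩, rfl⟩
  show osDel K L (osE K L S) ∈ Finsupp.supported K K _
  rw [osDel_osE]
  refine Submodule.sum_mem _ fun b hb => ?_
  refine Submodule.smul_mem _ _ (osE_mem_EB ?_)
  constructor
  · exact le_trans (Finset.sup_mono (Finset.erase_subset b S)) hS.1
  · rw [Finset.card_erase_of_mem hb, hS.2]
    omega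

lemma Fq_0 {q : L} : Submodule.map (osDel K L) (Fq (K := K) (L := L) q 0) = ⊥ := by
  apply le_bot_iff.1
  unfold Fq EB
  erw [Finsupp.supported_eq_span_single, Submodule.map_span, Submodule.span_le]
  rintro x ⟨y, ⟨S, hS, rfl⟩, rfl⟩
  have hS0 : S = ∅ := Finset.card_eq_zero.1 hS.2
  subst hS0
  show osDel K L (osE K L ∅) ∈ _
  rw [osDel_osE]
  simp

lemma Fq_top {q : L} : Fq (K := K) (L := L) q (Fintype.card (Atoms L) + 1) = ⊥ := by
  unfold Fq
  have : {S : Finset (Atoms L) | (S.sup fun a => a.val) ≤ q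
      ∧ S.card = Fintype.card (Atoms L) + 1} = ∅ := by
    ext S
    simp only [Set.mem_setOf_eq, Set.mem_empty_iff_false, iff_false, not_and]
    intro _
    have := Finset.card_le_univ S
    omega
  rw [this]
  exact Finsupp.supported_empty

lemma Fq_split (q : L) (k : ℕ) :
    Module.finrank K (Fq (K := K) (L := L) q k)
      = ∑ l ∈ Finset.univ.filter (fun l : L => l ≤ q),
          Module.finrank K (EB (R := K) (L := L) {S | vdeg S = (l, k)}) := by
  rw [finrank_partition vdeg ((Finset.univ.filter (fun l : L => l ≤ q)) ×ˢ {k})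
    (Fq (K := K) q k)
    (by
      refine EB_mono fun S hS => ?_
      exact Finset.mem_product.2 ⟨Finset.mem_filter.2 ⟨Finset.mem_univ _, hS.1⟩,
        Finset.mem_singleton.2 hS.2⟩)
    (fun j => filterLM_EB _ _)]
  rw [Finset.sum_product]
  refine Finset.sum_congr rfl fun l hl => ?_
  rw [Finset.sum_singleton]
  have hseteq : ({S : Finset (Atoms L) | (S.sup fun a => a.val) ≤ q ∧ S.card = k}
      ∩ {S | vdeg S = (l, k)}) = {S | vdeg S = (l, k)} := by
    ext S
    simp only [Set.mem_inter_iff, Set.mem_setOf_eq, and_iff_right_iff_imp]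
    intro hS
    have h1 : (S.sup fun a => a.val) = l := congrArg Prod.fst hS
    have h2 : S.card = k := congrArg Prod.snd hS
    rw [h1, h2]
    exact ⟨(Finset.mem_filter.1 hl).2, rfl⟩
  rw [show Fq (K := K) (L := L) q k = EB (R := K) {S | (S.sup fun a => a.val) ≤ q ∧ S.card = k} from rfl,
    EB_inter, hseteq]

lemma Gq_split (q : L) (k : ℕ) :
    Module.finrank K (osIdeal K L gl ⊓ Fq (K := K) (L := L) q k : Submodule K (OSModule K L))
      = ∑ l ∈ Finset.univ.filter (fun l : L => l ≤ q),
          Module.finrank K (osIdeal K L gl ⊓ EB (R := K) (L := L) {S | vdeg S = (l, k)} :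
            Submodule K (OSModule K L)) := by
  rw [finrank_partition vdeg ((Finset.univ.filter (fun l : L => l ≤ q)) ×ˢ {k})
    (osIdeal K L gl ⊓ Fq (K := K) q k)
    (by
      refine le_trans inf_le_right (EB_mono fun S hS => ?_)
      exact Finset.mem_product.2 ⟨Finset.mem_filter.2 ⟨Finset.mem_univ _, hS.1⟩,
        Finset.mem_singleton.2 hS.2⟩)
    (fun j => le_trans (Submodule.map_inf_le _)
      (inf_le_inf (ideal_stable gl j) (filterLM_EB _ _)))]
  rw [Finset.sum_product]
  refine Finset.sum_congr rfl fun l hl => ?_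
  rw [Finset.sum_singleton]
  have hseteq : ({S : Finset (Atoms L) | (S.sup fun a => a.val) ≤ q ∧ S.card = k}
      ∩ {S | vdeg S = (l, k)}) = {S | vdeg S = (l, k)} := by
    ext S
    simp only [Set.mem_inter_iff, Set.mem_setOf_eq, and_iff_right_iff_imp]
    intro hS
    have h1 : (S.sup fun a => a.val) = l := congrArg Prod.fst hS
    have h2 : S.card = k := congrArg Prod.snd hS
    rw [h1, h2]
    exact ⟨(Finset.mem_filter.1 hl).2, rfl⟩
  rw [inf_assoc,
    show Fq (K := K) (L := L) q k = EB (R := K) {S | (S.sup fun a => a.val) ≤ q ∧ S.card = k} from rfl,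
    EB_inter, hseteq]

end Complexes
section Final
variable {K : Type*} [Field K] {L : Type*} [Lattice L] [OrderBot L] [Fintype L]
  (gl : GeometricLattice L)

lemma sum_nu_zero (q : L) (hq : q ≠ ⊥) :
    ∑ l ∈ Finset.univ.filter (fun l : L => l ≤ q),
      (-1 : ℤ) ^ gl.rk l *
        (Module.finrank K (Submodule.map (osIdeal K L gl).mkQ (osPiece K L l)) : ℤ) = 0 := by
  classical
  obtain ⟨SL, hat, hsupq⟩ := gl.atomistic q hq
  have hSLne : SL.Nonempty := by
    rcases Finset.eq_empty_or_nonempty SL with rfl | h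
    · rw [Finset.sup_empty] at hsupq; exact absurd hsupq hq
    · exact h
  obtain ⟨a0, ha0⟩ := hSLne
  set at0 : Atoms L := ⟨a0, hat a0 ha0⟩ with hat0
  have ha0q : at0.val ≤ q := by
    rw [hsupq]; exact Finset.le_sup (f := id) ha0
  have hom : ∀ x : OSModule K L,
      osDel K L (mulE (R := K) {at0} x) + mulE (R := K) {at0} (osDel K L x) = x := by
    intro x
    have h := congrArg (fun f : OSModule K L →ₗ[K] OSModule K L => f x)
      (del_homotopy (R := K) at0)
    simpa using h
  have hh : ∀ x : OSModule K L, mulE (R := K) {at0} (mulE (R := K) {at0} x) = 0 := by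
    intro x
    have hnd : ¬ Disjoint ({at0} : Finset (Atoms L)) {at0} := by
      rw [Finset.disjoint_singleton_left]
      simp
    have h := congrArg (fun f : OSModule K L →ₗ[K] OSModule K L => f x)
      (mulE_mulE_zero (R := K) hnd)
    simpa using h
  have hGh : ∀ k, Submodule.map (mulE (R := K) {at0}) (osIdeal K L gl ⊓ Fq (K := K) q k)
      ≤ osIdeal K L gl ⊓ Fq (K := K) q (k + 1) := fun k =>
    le_trans (Submodule.map_inf_le _) (inf_le_inf (mulE_ideal gl _) (Fq_h at0 ha0q k))
  have hGd : ∀ k, Submodule.map (osDel K L) (osIdeal K L gl ⊓ Fq (K := K) q (k + 1))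
      ≤ osIdeal K L gl ⊓ Fq (K := K) q k := fun k =>
    le_trans (Submodule.map_inf_le _) (inf_le_inf (del_ideal gl) (Fq_d k))
  have hG0 : Submodule.map (osDel K L) (osIdeal K L gl ⊓ Fq (K := K) (L := L) q 0) = ⊥ :=
    le_bot_iff.1 (le_trans (Submodule.map_mono inf_le_right) (le_of_eq Fq_0))
  have hGtop : osIdeal K L gl ⊓ Fq (K := K) (L := L) q (Fintype.card (Atoms L) + 1) = ⊥ := by
    rw [Fq_top, inf_bot_eq]
  have hFsum := euler_zero (fun k => Fq (K := K) (L := L) q k) (mulE (R := K) {at0})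
    (osDel K L) hom hh (Fq_h at0 ha0q) (fun k => Fq_d k) Fq_0 Fq_top
  have hGsum := euler_zero (fun k => osIdeal K L gl ⊓ Fq (K := K) (L := L) q k)
    (mulE (R := K) {at0}) (osDel K L) hom hh hGh hGd hG0 hGtop
  rw [Finset.sum_congr rfl (fun l _ => key_l (K := K) gl l), Finset.sum_comm]
  have hswap : ∀ k ∈ Finset.range (Fintype.card (Atoms L) + 1),
      (∑ l ∈ Finset.univ.filter (fun l : L => l ≤ q),
        (-1 : ℤ) ^ k *
          ((Module.finrank K (EB (R := K) (L := L) {S | vdeg S = (l, k)}) : ℤ)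
            - (Module.finrank K (osIdeal K L gl ⊓ EB (R := K) {S | vdeg S = (l, k)} :
                Submodule K (OSModule K L)) : ℤ)))
      = (-1 : ℤ) ^ k *
          ((Module.finrank K (Fq (K := K) (L := L) q k) : ℤ)
            - (Module.finrank K (osIdeal K L gl ⊓ Fq (K := K) (L := L) q k :
                Submodule K (OSModule K L)) : ℤ)) := by
    intro k _
    rw [← Finset.mul_sum, Finset.sum_sub_distrib, Fq_split (K := K) q k, Gq_split gl q k]
    push_cast
    ring
  rw [Finset.sum_congr rfl hswap]
  have hFtop0 : (Module.finrank K
      (Fq (K := K) (L := L) q (Fintype.card (Atoms L) + 1)) : ℤ) = 0 := by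
    rw [Fq_top, finrank_bot]; rfl
  have hGtop0 : (Module.finrank K (osIdeal K L gl ⊓
      Fq (K := K) (L := L) q (Fintype.card (Atoms L) + 1) : Submodule K (OSModule K L)) : ℤ)
      = 0 := by
    rw [hGtop, finrank_bot]; rfl
  have h2 : ∑ k ∈ Finset.range (Fintype.card (Atoms L) + 2),
      (-1 : ℤ) ^ k *
        ((Module.finrank K (Fq (K := K) (L := L) q k) : ℤ)
          - (Module.finrank K (osIdeal K L gl ⊓ Fq (K := K) (L := L) q k :
              Submodule K (OSModule K L)) : ℤ)) = 0 := by
    have hsplit : ∀ k ∈ Finset.range (Fintype.card (Atoms L) + 2),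
        (-1 : ℤ) ^ k *
          ((Module.finrank K (Fq (K := K) (L := L) q k) : ℤ)
            - (Module.finrank K (osIdeal K L gl ⊓ Fq (K := K) (L := L) q k :
                Submodule K (OSModule K L)) : ℤ))
        = (-1 : ℤ) ^ k * (Module.finrank K (Fq (K := K) (L := L) q k) : ℤ)
          - (-1 : ℤ) ^ k * (Module.finrank K (osIdeal K L gl ⊓ Fq (K := K) (L := L) q k :
              Submodule K (OSModule K L)) : ℤ) := by
      intro k _
      ring
    rw [Finset.sum_congr rfl hsplit, Finset.sum_sub_distrib, hFsum, hGsum, sub_zero]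
  rw [Finset.sum_range_succ, hFtop0, hGtop0] at h2
  simpa using h2

theorem finrank_osPiece_eq_moebius' (μ : L → ℤ)
    (hμ_bot : μ ⊥ = 1)
    (hμ_sum : ∀ q : L, q ≠ ⊥ →
      ∑ l ∈ Finset.univ.filter (fun l : L => l ≤ q), μ l = 0)
    (p : L) :
    (Module.finrank K
        (Submodule.map (osIdeal K L gl).mkQ (osPiece K L p)) : ℤ) =
      (-1 : ℤ) ^ gl.rk p * μ p := by
  classical
  set ν : L → ℤ := fun l =>
    (-1 : ℤ) ^ gl.rk l *
      (Module.finrank K (Submodule.map (osIdeal K L gl).mkQ (osPiece K L l)) : ℤ) with hν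
  have hν_bot : ν ⊥ = 1 := by
    rw [hν]
    simp only [d_bot (K := K) gl, gl.rk_bot, pow_zero, one_mul, Nat.cast_one]
  have hν_sum : ∀ q : L, q ≠ ⊥ →
      ∑ l ∈ Finset.univ.filter (fun l : L => l ≤ q), ν l = 0 := fun q hq =>
    sum_nu_zero (K := K) gl q hq
  have hall : ∀ l : L, ν l = μ l := by
    intro l
    induction l using WellFoundedLT.induction with
    | _ l ih =>
      by_cases hl : l = ⊥
      · rw [hl, hν_bot, hμ_bot]
      · have h1 := hν_sum l hl
        have h2 := hμ_sum l hl
        have hmem : l ∈ Finset.univ.filter (fun x : L => x ≤ l) :=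
          Finset.mem_filter.2 ⟨Finset.mem_univ _, le_refl _⟩
        rw [← Finset.add_sum_erase _ ν hmem] at h1
        rw [← Finset.add_sum_erase _ μ hmem] at h2
        have hrest : ∑ x ∈ (Finset.univ.filter (fun x : L => x ≤ l)).erase l, ν x
            = ∑ x ∈ (Finset.univ.filter (fun x : L => x ≤ l)).erase l, μ x := by
          refine Finset.sum_congr rfl fun x hx => ?_
          have hx1 := Finset.mem_erase.1 hx
          exact ih x (lt_of_le_of_ne (Finset.mem_filter.1 hx1.2).2 hx1.1)
        omega
  have := hall p
  have hsq : (-1 : ℤ) ^ gl.rk p * (-1 : ℤ) ^ gl.rk p = 1 := by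
    rw [← pow_add, neg_one_pow_double]
  calc (Module.finrank K
        (Submodule.map (osIdeal K L gl).mkQ (osPiece K L p)) : ℤ)
      = ((-1 : ℤ) ^ gl.rk p * (-1 : ℤ) ^ gl.rk p) *
          (Module.finrank K
            (Submodule.map (osIdeal K L gl).mkQ (osPiece K L p)) : ℤ) := by rw [hsq, one_mul]
    _ = (-1 : ℤ) ^ gl.rk p * μ p := by
        rw [mul_assoc]
        exact congrArg (fun z => (-1 : ℤ) ^ gl.rk p * z) this

end Final

/-- For the Orlik–Solomon algebra of a finite geometric lattice over a field `K`,
the dimension of the homogeneous component `A^*(L)_p` (the image of the span of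
the monomials `e_S` with `⋁ S = p` in the quotient `E^*(L)/I(L)`) equals
`(-1)^{rk p} μ(0, p)`, where `μ` is the Möbius function of `L`, characterized by
`μ(0, ⊥) = 1` and `∑_{l ≤ q} μ(0, l) = 0` for all `q ≠ ⊥`. -/
theorem finrank_osPiece_eq_moebius {K : Type*} [Field K]
    {L' : Type*} [Lattice L'] [OrderBot L'] [Fintype L']
    (gl : GeometricLattice L') (μ : L' → ℤ)
    (hμ_bot : μ ⊥ = 1)
    (hμ_sum : ∀ q : L', q ≠ ⊥ →
      ∑ l ∈ Finset.univ.filter (fun l : L' => l ≤ q), μ l = 0)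
    (p : L') :
    (Module.finrank K
        (Submodule.map (osIdeal K L' gl).mkQ (osPiece K L' p)) : ℤ) =
      (-1 : ℤ) ^ gl.rk p * μ p :=
  finrank_osPiece_eq_moebius' gl μ hμ_bot hμ_sum p
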